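/- Let σ = q^s with gcd(s,n)=1, and let f(x) = a_0 x + a_1 x^σ + ... + a_{k-1} x^{σ^{k-1}} - x^{σ^k} with a_i ∈ F_{q^n}. Let A be the k×k companion-type matrix with subdiagonal entries 1, last column (a_0,...,a_{k-1})^T, and zeros elsewhere. Then f has exactly q^k roots in F_{q^n} (i.e., its kernel has F_q-dimension k) if and only if A · A^σ · ... · A^{σ^{n-1}} = I_k, where A^{σ^i} denotes entrywise application of x ↦ x^{σ^i}. -/

import Mathlib

open Matrix Finset Submodule

set_option linter.unusedSectionVars false
namespace Stmt2Aux

variable {L : Type*} [Field L] [Fintype L]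

lemma pow_q_mul (q n : ℕ) (hL : Fintype.card L = q ^ n) (x : L) (d : ℕ) :
    x ^ q ^ (n * d) = x := by
  induction d with
  | zero => simp
  | succ d ih =>
      rw [Nat.mul_succ, pow_add, pow_mul, ih, ← hL, FiniteField.pow_card]

lemma pow_q_mod (q n : ℕ) (hL : Fintype.card L = q ^ n) (x : L) (a : ℕ) :
    x ^ q ^ a = x ^ q ^ (a % n) := by
  conv_lhs => rw [← Nat.div_add_mod a n, pow_add, pow_mul,
    pow_q_mul q n hL]

lemma pow_exp_inj_aux (q n : ℕ) (hq : 2 ≤ q) (hL : Fintype.card L = q ^ n)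
    {a b : ℕ} (hb : b < n) (hab : a < b) (h : ∀ x : L, x ^ q ^ a = x ^ q ^ b) : False := by
  obtain ⟨g, hg⟩ := IsCyclic.exists_generator (α := Lˣ)
  have hord : orderOf g = q ^ n - 1 := by
    rw [orderOf_eq_card_of_forall_mem_zpowers hg, Nat.card_units, Nat.card_eq_fintype_card, hL]
  have hgpow : g ^ q ^ a = g ^ q ^ b := by
    apply Units.ext
    push_cast
    exact h g
  have hle : q ^ a ≤ q ^ b := Nat.pow_le_pow_right (by omega) hab.le
  have h1 : g ^ (q ^ b - q ^ a) = 1 := by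
    have h2 : g ^ (q ^ b - q ^ a) * g ^ (q ^ a) = 1 * g ^ (q ^ a) := by
      rw [← pow_add, Nat.sub_add_cancel hle, ← hgpow, one_mul]
    exact mul_right_cancel h2
  have hdvd : q ^ n - 1 ∣ q ^ b - q ^ a := hord ▸ orderOf_dvd_of_pow_eq_one h1
  have hlt : q ^ a < q ^ b := Nat.pow_lt_pow_right (by omega) hab
  have hbn : q ^ b < q ^ n := Nat.pow_lt_pow_right (by omega) hb
  have hle2 : q ^ n - 1 ≤ q ^ b - q ^ a := Nat.le_of_dvd (by omega) hdvd
  have : 1 ≤ q ^ a := Nat.one_le_pow _ _ (by omega)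
  omega

lemma pow_exp_inj (q n : ℕ) (hq : 2 ≤ q) (hL : Fintype.card L = q ^ n)
    {a b : ℕ} (ha : a < n) (hb : b < n) (h : ∀ x : L, x ^ q ^ a = x ^ q ^ b) : a = b := by
  rcases lt_trichotomy a b with hab | hab | hab
  · exact absurd (pow_exp_inj_aux q n hq hL hb hab h) (by simp)
  · exact hab
  · exact absurd (pow_exp_inj_aux q n hq hL ha hab fun x => (h x).symm) (by simp)

lemma pow_q_fixed_pow (q : ℕ) {c : L} (h : c ^ q = c) (m : ℕ) : c ^ q ^ m = c := by
  induction m with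
  | zero => simp
  | succ m ih => rw [pow_succ, pow_mul, ih, h]

lemma fq_card (q n : ℕ) (hq : 2 ≤ q) (hn : 0 < n) (hL : Fintype.card L = q ^ n) :
    Set.ncard {c : L | c ^ q = c} = q := by
  classical
  apply le_antisymm
  · set g : Polynomial L := Polynomial.X ^ q - Polynomial.X with hgdef
    have hg0 : g ≠ 0 := by
      intro h
      have := congrArg (fun P => Polynomial.coeff P 1) h
      simp only [hgdef, Polynomial.coeff_sub, Polynomial.coeff_X_pow,
        Polynomial.coeff_X_one, Polynomial.coeff_zero] at this
      rw [if_neg (by omega : ¬ (1 = q))] at this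
      simp at this
    have hsub : {c : L | c ^ q = c} ⊆ ↑g.roots.toFinset := by
      intro c hc
      simp only [Finset.coe_sort_coe, Multiset.mem_toFinset, Finset.mem_coe]
      rw [Polynomial.mem_roots hg0]
      simp [Polynomial.IsRoot, hgdef, sub_eq_zero, hc.out]
    calc Set.ncard {c : L | c ^ q = c} ≤ (↑g.roots.toFinset : Set L).ncard :=
          Set.ncard_le_ncard hsub (Set.toFinite _)
      _ = g.roots.toFinset.card := Set.ncard_coe_finset _
      _ ≤ Multiset.card g.roots := Multiset.toFinset_card_le _
      _ ≤ g.natDegree := Polynomial.card_roots' g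
      _ ≤ q := by
          refine le_trans (Polynomial.natDegree_sub_le _ _) ?_
          simp [Polynomial.natDegree_X_pow, Polynomial.natDegree_X]
          omega
  · obtain ⟨g, hg⟩ := IsCyclic.exists_generator (α := Lˣ)
    have hord : orderOf g = q ^ n - 1 := by
      rw [orderOf_eq_card_of_forall_mem_zpowers hg, Nat.card_units, Nat.card_eq_fintype_card, hL]
    have hdvd : (q - 1) ∣ (q ^ n - 1) := by
      simpa using Nat.sub_dvd_pow_sub_pow q 1 n
    have hN0 : 0 < q ^ n - 1 := by
      have : 1 < q ^ n := Nat.one_lt_pow (by omega) (by omega)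
      omega
    set η : Lˣ := g ^ ((q ^ n - 1) / (q - 1)) with hη
    have hdd : (q ^ n - 1) / (q - 1) ∣ q ^ n - 1 := Nat.div_dvd_of_dvd hdvd
    have hordη : orderOf η = q - 1 := by
      rw [hη, orderOf_pow, hord, Nat.gcd_eq_right hdd, Nat.div_div_self hdvd hN0.ne']
    set S : Set L := insert (0:L) ((fun u : Lˣ => (u:L)) '' ↑(Subgroup.zpowers η)) with hS
    have hsub : S ⊆ {c : L | c ^ q = c} := by
      rintro c (rfl | ⟨u, hu, rfl⟩)
      · simp [zero_pow (by omega : ¬ q = 0)]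
      · have hdvd2 : orderOf u ∣ q - 1 := hordη ▸ orderOf_dvd_of_mem_zpowers hu
        have h1 : u ^ (q - 1) = 1 := orderOf_dvd_iff_pow_eq_one.mp hdvd2
        have h2 : u ^ q = u := by
          have : u ^ ((q - 1) + 1) = u ^ (q - 1) * u := pow_succ u (q - 1)
          rw [h1, one_mul] at this
          rw [← this]
          congr 1
          omega
        show ((u : L)) ^ q = (u : L)
        rw [← Units.val_pow_eq_pow_val, h2]
    have hcount : S.ncard = q := by
      have h0 : (0:L) ∉ (fun u : Lˣ => (u:L)) '' ↑(Subgroup.zpowers η) := by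
        rintro ⟨u, -, hu⟩
        exact u.ne_zero hu
      rw [hS, Set.ncard_insert_of_notMem h0 (Set.toFinite _),
        Set.ncard_image_of_injective _ (fun _ _ h => Units.ext h),
        ← Nat.card_coe_set_eq]
      have : Nat.card ↥(↑(Subgroup.zpowers η) : Set Lˣ) = orderOf η := Nat.card_zpowers η
      rw [this, hordη]
      omega
    calc q = S.ncard := hcount.symm
      _ ≤ Set.ncard {c : L | c ^ q = c} := Set.ncard_le_ncard hsub (Set.toFinite _)

lemma fixed_of_pow_qs (q n s : ℕ) (hq : 2 ≤ q) (hn : 0 < n) (hs : Nat.gcd s n = 1)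
    (hL : Fintype.card L = q ^ n) {c : L} (h : c ^ q ^ s = c) : c ^ q = c := by
  by_cases hn1 : n = 1
  · subst hn1
    have := FiniteField.pow_card c
    rw [hL, pow_one] at this
    exact this
  have hn2 : 1 < n := by omega
  obtain ⟨x, -, hx⟩ := Nat.exists_mul_mod_eq_one_of_coprime hs hn2
  rcases eq_or_ne c 0 with rfl | hc0
  · simp [zero_pow (by omega : ¬ q = 0)]
  set u : Lˣ := Units.mk0 c hc0 with hu
  have hupow : ∀ m : ℕ, u ^ q ^ m = u → orderOf u ∣ q ^ m - 1 := by
    intro m hm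
    apply orderOf_dvd_of_pow_eq_one
    have h1 : 1 ≤ q ^ m := Nat.one_le_pow _ _ (by omega)
    have h2 : u ^ ((q ^ m - 1) + 1) = u ^ (q ^ m - 1) * u := pow_succ u _
    rw [Nat.sub_add_cancel h1, hm] at h2
    exact mul_right_cancel (h2.symm.trans (one_mul u).symm)
  have hd1 : orderOf u ∣ q ^ s - 1 := by
    apply hupow
    apply Units.ext
    push_cast
    exact h
  have hd2 : orderOf u ∣ q ^ n - 1 := by
    apply hupow
    apply Units.ext
    push_cast
    have := FiniteField.pow_card c
    rw [hL] at this
    exact this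
  set y := s * x / n with hy
  have hsx : s * x = n * y + 1 := by
    have h7 := Nat.div_add_mod (s * x) n
    rw [← hy] at h7
    omega
  have hd1' : orderOf u ∣ q ^ (s * x) - 1 := by
    refine hd1.trans ?_
    have := Nat.sub_dvd_pow_sub_pow (q ^ s) 1 x
    rwa [one_pow, ← pow_mul] at this
  have hd2' : orderOf u ∣ q ^ (n * y) - 1 := by
    refine hd2.trans ?_
    have := Nat.sub_dvd_pow_sub_pow (q ^ n) 1 y
    rwa [one_pow, ← pow_mul] at this
  have key : (q ^ (s * x) - 1) - q * (q ^ (n * y) - 1) = q - 1 := by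
    have h3 : q ^ (s * x) = q ^ (n * y) * q := by rw [hsx, pow_succ]
    have h4 : q * (q ^ (n * y) - 1) = q ^ (n * y) * q - q := by
      rw [Nat.mul_sub, mul_one, mul_comm]
    have h5 : 1 ≤ q ^ (n * y) := Nat.one_le_pow _ _ (by omega)
    have h6 : q ≤ q ^ (n * y) * q := Nat.le_mul_of_pos_left q h5
    omega
  have hdq : orderOf u ∣ q - 1 := key ▸ Nat.dvd_sub hd1' (Dvd.dvd.mul_left hd2' q)
  have h1 : u ^ (q - 1) = 1 := orderOf_dvd_iff_pow_eq_one.mp hdq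
  have h2 : u ^ q = u := by
    have h3 : u ^ ((q - 1) + 1) = u ^ (q - 1) * u := pow_succ u _
    rw [h1, one_mul, (by omega : q - 1 + 1 = q)] at h3
    exact h3
  have := congrArg (Units.val) h2
  push_cast at this
  exact this

lemma dedekind (q n s : ℕ) (hq : 2 ≤ q) (hn : 0 < n) (hs : Nat.gcd s n = 1)
    (hL : Fintype.card L = q ^ n) (b : Fin n → L)
    (h : ∀ c : L, ∑ i : Fin n, b i * c ^ q ^ (s * (n - (i : ℕ))) = 0) :
    ∀ i, b i = 0 := by
  classical
  set Ψ : Fin n → (L →* L) := fun i => powMonoidHom (q ^ (s * (n - (i : ℕ)))) with hΨ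
  have hinj : Function.Injective Ψ := by
    intro i j hij
    have hfun : ∀ x : L, x ^ q ^ (s * (n - (i:ℕ))) = x ^ q ^ (s * (n - (j:ℕ))) := by
      intro x
      exact congrArg (fun f : L →* L => f x) hij
    have h1 : ∀ x : L, x ^ q ^ ((s * (n - (i:ℕ))) % n) = x ^ q ^ ((s * (n - (j:ℕ))) % n) := by
      intro x
      rw [← pow_q_mod q n hL, ← pow_q_mod q n hL]
      exact hfun x
    have h2 := pow_exp_inj q n hq hL (Nat.mod_lt _ hn) (Nat.mod_lt _ hn) h1
    have h3 : (n - (i:ℕ)) % n = (n - (j:ℕ)) % n := by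
      have hc : Nat.Coprime s n := hs
      exact Nat.ModEq.cancel_left_of_coprime (by simpa [Nat.Coprime, Nat.gcd_comm] using hc) h2
    have hi : (i : ℕ) < n := i.isLt
    have hj : (j : ℕ) < n := j.isLt
    have hmod : ∀ m : ℕ, m < n → (n - m) % n = if m = 0 then 0 else n - m := by
      intro m hm
      rcases Nat.eq_zero_or_pos m with rfl | hm0
      · simp
      · rw [if_neg (by omega), Nat.mod_eq_of_lt (by omega)]
    have h3' := h3
    rw [hmod _ hi, hmod _ hj] at h3'
    apply Fin.ext
    split_ifs at h3' <;> omega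
  have hli := (linearIndependent_monoidHom L L).comp Ψ hinj
  rw [Fintype.linearIndependent_iff] at hli
  intro i
  apply hli b _ i
  funext c
  have := h c
  simpa [Finset.sum_apply, hΨ, powMonoidHom, mul_comm] using this

lemma vecA_last {k : ℕ} (hk : 0 < k) (a : Fin k → L) (A : Matrix (Fin k) (Fin k) L)
    (hA : A = Matrix.of fun i j : Fin k =>
      if (i : ℕ) = (j : ℕ) + 1 then 1 else if (j : ℕ) = k - 1 then a i else 0)
    (r : Fin k → L) (j : Fin k) (hj : (j : ℕ) = k - 1) :
    Matrix.vecMul r A j = ∑ i : Fin k, r i * a i := by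
  subst hA
  simp only [Matrix.vecMul, dotProduct, Matrix.of_apply]
  apply Finset.sum_congr rfl
  intro i _
  have hi := i.isLt
  rw [if_neg (by omega : ¬ ((i:ℕ) = (j:ℕ) + 1)), if_pos hj]

lemma vecA_mid {k : ℕ} (a : Fin k → L) (A : Matrix (Fin k) (Fin k) L)
    (hA : A = Matrix.of fun i j : Fin k =>
      if (i : ℕ) = (j : ℕ) + 1 then 1 else if (j : ℕ) = k - 1 then a i else 0)
    (r : Fin k → L) (j : Fin k) (hj : (j : ℕ) + 1 < k) :
    Matrix.vecMul r A j = r ⟨(j : ℕ) + 1, hj⟩ := by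
  subst hA
  simp only [Matrix.vecMul, dotProduct, Matrix.of_apply]
  rw [Finset.sum_eq_single (⟨(j:ℕ)+1, hj⟩ : Fin k)]
  · simp
  · intro i _ hi
    have : ¬ ((i:ℕ) = (j:ℕ) + 1) := fun hc => hi (Fin.ext hc)
    have hj2 := j.isLt
    rw [if_neg this, if_neg (by omega : ¬ ((j:ℕ) = k - 1)), mul_zero]
  · intro h
    exact absurd (Finset.mem_univ _) h

end Stmt2Aux

open Stmt2Aux

/-- Main theorem. For `σ = q^s` with `gcd(s,n) = 1`, the `σ`-polynomial
`f(x) = a_0 x + ... + a_{k-1} x^{σ^{k-1}} - x^{σ^k}` over `F_{q^n}` has exactly `q^k`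
roots in `F_{q^n}` (maximum kernel) if and only if `A · A^σ · ... · A^{σ^{n-1}} = I_k`,
where `A` is the companion-type matrix of `f`. -/
theorem stmt2 (q n k s : ℕ) (hq : IsPrimePow q) (hn : 0 < n) (hk : 0 < k) (hkn : k ≤ n)
    (hs : Nat.gcd s n = 1)
    (L : Type*) [Field L] [Fintype L] (hL : Fintype.card L = q ^ n)
    (a : Fin k → L)
    (A : Matrix (Fin k) (Fin k) L)
    (hA : A = Matrix.of fun i j : Fin k =>
      if (i : ℕ) = (j : ℕ) + 1 then 1 else if (j : ℕ) = k - 1 then a i else 0) :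
    Set.ncard {x : L | (∑ i : Fin k, a i * x ^ q ^ (s * (i : ℕ))) - x ^ q ^ (s * k) = 0} = q ^ k
      ↔ ((List.range n).map (fun i => A.map (fun y => y ^ q ^ (s * i)))).prod = 1 := by
  classical
  have hq2 : 2 ≤ q := hq.two_le
  -- characteristic setup
  obtain ⟨p, e, hpp, he, hpe⟩ := hq
  have hp : p.Prime := Nat.prime_iff.mpr hpp
  haveI : Fact p.Prime := ⟨hp⟩
  haveI hcharP : CharP L p := by
    obtain ⟨m, hrp, hcard⟩ := FiniteField.card L (ringChar L)
    have h1 : p ∣ Fintype.card L := by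
      rw [hL, ← hpe, ← pow_mul]
      exact dvd_pow_self p (by positivity)
    rw [hcard] at h1
    have h2 : p ∣ ringChar L := hp.dvd_of_dvd_pow h1
    have h3 : p = ringChar L := ((Nat.prime_dvd_prime_iff_eq hp hrp).mp h2)
    rw [h3]
    exact ringChar.charP L
  haveI : ExpChar L p := ExpChar.prime hp
  set F : ℕ → L →+* L := fun j => iterateFrobenius L p (e * (s * j)) with hFdef
  have hF : ∀ (j : ℕ) (x : L), F j x = x ^ q ^ (s * j) := by
    intro j x
    rw [hFdef]
    simp only [iterateFrobenius_def]
    rw [pow_mul, hpe]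
  -- power arithmetic
  have hqn : ∀ x : L, x ^ q ^ n = x := by
    intro x
    rw [← hL]
    exact FiniteField.pow_card x
  have hqsn : ∀ x : L, x ^ q ^ (s * n) = x := by
    intro x
    rw [mul_comm]
    exact pow_q_mul q n hL x s
  have hcomp : ∀ (m1 m2 : ℕ) (x : L), (x ^ q ^ (s * m1)) ^ q ^ (s * m2) = x ^ q ^ (s * (m1 + m2)) := by
    intro m1 m2 x
    rw [← pow_mul, ← pow_add, ← mul_add]
  have hFadd : ∀ (a b : ℕ) (x : L), F a (F b x) = F (a + b) x := by
    intro a b x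
    rw [hF, hF, hF, hcomp, Nat.add_comm b a]
  -- the sets
  set Roots : Set L :=
    {x : L | (∑ i : Fin k, a i * x ^ q ^ (s * (i : ℕ))) - x ^ q ^ (s * k) = 0} with hRootsDef
  set Fix : Set (Fin k → L) :=
    {r : Fin k → L | ∀ j : Fin k, (r j) ^ q ^ s = Matrix.vecMul r A j} with hFixDef
  set Pm : ℕ → Matrix (Fin k) (Fin k) L :=
    fun m => ((List.range m).map (fun i => A.map (fun y => y ^ q ^ (s * i)))).prod with hPmDef
  set Φ : L → (Fin k → L) := fun x => fun j => x ^ q ^ (s * (j : ℕ)) with hΦdef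
  -- Step 1 : Fix is the image of the roots
  have hΦinj : Function.Injective Φ := by
    intro x y hxy
    have := congrFun hxy ⟨0, hk⟩
    simpa [hΦdef] using this
  have hFixeq : Fix = Φ '' Roots := by
    apply Set.Subset.antisymm
    · intro r hr
      rw [hFixDef, Set.mem_setOf_eq] at hr
      have hall : ∀ (m : ℕ) (hm : m < k), r ⟨m, hm⟩ = (r ⟨0, hk⟩) ^ q ^ (s * m) := by
        intro m
        induction m with
        | zero => intro hm; simp
        | succ m ih =>
            intro hm
            have hm' : m < k := by omega
            have hfix := hr ⟨m, hm'⟩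
            rw [vecA_mid a A hA r ⟨m, hm'⟩ (by simpa using hm)] at hfix
            have hfix' : r ⟨m, hm'⟩ ^ q ^ s = r ⟨m + 1, hm⟩ := by
              convert hfix using 2
            rw [← hfix', ih hm']
            have := hcomp m 1 (r ⟨0, hk⟩)
            rw [mul_one] at this
            exact this
      have h2 : ∀ i : Fin k, r i = (r ⟨0, hk⟩) ^ q ^ (s * (i : ℕ)) := by
        intro i
        have := hall i i.isLt
        simpa using this
      set x := r ⟨0, hk⟩ with hx
      have hroot : x ∈ Roots := by
        have hfix := hr ⟨k - 1, by omega⟩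
        rw [vecA_last hk a A hA r ⟨k - 1, by omega⟩ (by simp)] at hfix
        rw [hRootsDef, Set.mem_setOf_eq, sub_eq_zero]
        calc ∑ i : Fin k, a i * x ^ q ^ (s * (i : ℕ))
            = ∑ i : Fin k, r i * a i := by
              apply Finset.sum_congr rfl
              intro i _
              rw [h2 i, mul_comm]
          _ = (r ⟨k - 1, by omega⟩) ^ q ^ s := hfix.symm
          _ = (x ^ q ^ (s * (k - 1))) ^ q ^ s := by rw [hall (k - 1) (by omega)]
          _ = x ^ q ^ (s * k) := by
              have := hcomp (k - 1) 1 x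
              rw [mul_one] at this
              rw [this, (by omega : k - 1 + 1 = k)]
      refine ⟨x, hroot, ?_⟩
      funext j
      rw [hΦdef]
      exact (h2 j).symm
    · rintro r ⟨x, hx, rfl⟩
      rw [hFixDef, Set.mem_setOf_eq]
      intro j
      rw [hRootsDef, Set.mem_setOf_eq, sub_eq_zero] at hx
      by_cases hj : (j : ℕ) + 1 < k
      · rw [vecA_mid a A hA _ j hj]
        show (x ^ q ^ (s * (j : ℕ))) ^ q ^ s = Φ x ⟨(j : ℕ) + 1, hj⟩
        have := hcomp (j : ℕ) 1 x
        rw [mul_one] at this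
        rw [this, hΦdef]
      · have hjeq : (j : ℕ) = k - 1 := by have := j.isLt; omega
        rw [vecA_last hk a A hA _ j hjeq]
        show (x ^ q ^ (s * (j : ℕ))) ^ q ^ s = ∑ i : Fin k, Φ x i * a i
        have h3 := hcomp (j : ℕ) 1 x
        rw [mul_one] at h3
        rw [h3, (by omega : (j : ℕ) + 1 = k), ← hx]
        apply Finset.sum_congr rfl
        intro i _
        rw [hΦdef, mul_comm]
  have hcard1 : Roots.ncard = Fix.ncard := by
    rw [hFixeq, Set.ncard_image_of_injective _ hΦinj]
  -- Step 2 : basis of the span of Fix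
  obtain ⟨bs, hbsub, hbspan, hbli⟩ := exists_linearIndependent L Fix
  haveI : Fintype bs := (Set.toFinite bs).fintype
  set d : ℕ := Module.finrank L (Submodule.span L Fix) with hddef
  have hdcard : bs.toFinset.card = d := by
    rw [hddef, ← hbspan]
    exact (finrank_span_set_eq_card hbli).symm
  set v : bs → (Fin k → L) := fun i => (i : Fin k → L) with hvdef
  have hli' : ∀ g : bs → L, (∑ i : bs, g i • v i) = 0 → ∀ i, g i = 0 := by
    intro g hg
    exact Fintype.linearIndependent_iff.mp hbli g hg
  have hvFix : ∀ i : bs, (v i) ∈ Fix := fun i => hbsub i.2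
  have hvFix' : ∀ (i : bs) (j : Fin k), (v i j) ^ q ^ s = Matrix.vecMul (v i) A j := by
    intro i
    have := hvFix i
    rw [hFixDef, Set.mem_setOf_eq] at this
    exact this
  set Ψ : (bs → L) → (Fin k → L) := fun c => ∑ i : bs, c i • v i with hΨdef
  have hsum : ∀ (g : bs → L), Matrix.vecMul (∑ i : bs, g i • v i) A
      = ∑ i : bs, g i • Matrix.vecMul (v i) A := by
    intro g
    rw [← Matrix.vecMulLinear_apply, map_sum]
    apply Finset.sum_congr rfl
    intro i _
    rw [_root_.map_smul, Matrix.vecMulLinear_apply]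
  have hΨinj : Function.Injective Ψ := by
    intro c c' hcc
    have h0 : ∑ i : bs, (c i - c' i) • v i = 0 := by
      simp only [sub_smul]
      rw [Finset.sum_sub_distrib]
      exact sub_eq_zero.mpr hcc
    funext i
    exact sub_eq_zero.mp (hli' _ h0 i)
  set T : Set (bs → L) := {c | ∀ i, (c i) ^ q = c i} with hTdef
  have hcard2 : Fix.ncard = q ^ d := by
    have hTFix : Fix = Ψ '' T := by
      apply Set.Subset.antisymm
      · intro u hu
        have hu' : u ∈ Submodule.span L (Set.range v) := by
          rw [hvdef, Subtype.range_coe, hbspan]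
          exact Submodule.subset_span hu
        obtain ⟨c, hc⟩ := (mem_span_range_iff_exists_fun L).mp hu'
        rw [hFixDef, Set.mem_setOf_eq] at hu
        have hujeq : ∀ j, u j = F (n - 1) (Matrix.vecMul u A j) := by
          intro j
          rw [← hu j, hF]
          have h2 := hcomp 1 (n - 1) (u j)
          rw [mul_one] at h2
          rw [h2, (by omega : 1 + (n - 1) = n)]
          exact (hqsn (u j)).symm
        have hrep2 : u = ∑ i : bs, (F (n - 1) (c i)) • v i := by
          funext j
          rw [hujeq j, ← hc, hsum c]
          rw [Finset.sum_apply, map_sum, Finset.sum_apply]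
          apply Finset.sum_congr rfl
          intro i _
          simp only [Pi.smul_apply, smul_eq_mul, _root_.map_mul]
          congr 1
          rw [← hvFix' i j, hF]
          have h2 := hcomp 1 (n - 1) (v i j)
          rw [mul_one] at h2
          rw [h2, (by omega : 1 + (n - 1) = n)]
          exact hqsn (v i j)
        have hcfix : ∀ i, F (n - 1) (c i) = c i := by
          intro i
          have h0 : ∑ i : bs, (F (n - 1) (c i) - c i) • v i = 0 := by
            simp only [sub_smul]
            rw [Finset.sum_sub_distrib]
            rw [← hrep2, hc, sub_self]
          exact sub_eq_zero.mp (hli' _ h0 i)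
        refine ⟨c, ?_, hc⟩
        rw [hTdef, Set.mem_setOf_eq]
        intro i
        apply fixed_of_pow_qs q n s hq2 hn hs hL
        have h1 := hcfix i
        rw [hF] at h1
        have h2 := congrArg (fun y : L => y ^ q ^ (s * 1)) h1
        rw [hcomp (n - 1) 1 (c i), (by omega : n - 1 + 1 = n), hqsn (c i)] at h2
        rw [mul_one] at h2
        exact h2.symm
      · rintro u ⟨c, hcT, rfl⟩
        rw [hTdef, Set.mem_setOf_eq] at hcT
        rw [hFixDef, Set.mem_setOf_eq]
        intro j
        show (∑ i : bs, c i • v i) j ^ q ^ s = ((∑ i : bs, c i • v i) ᵥ* A) j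
        rw [hsum c, Finset.sum_apply, Finset.sum_apply]
        have hF1 : ∀ y : L, F 1 y = y ^ q ^ s := by
          intro y
          rw [hF, mul_one]
        rw [← hF1, map_sum]
        apply Finset.sum_congr rfl
        intro i _
        simp only [Pi.smul_apply, smul_eq_mul, _root_.map_mul]
        rw [hF1, hF1, pow_q_fixed_pow q (hcT i), hvFix' i j]
    rw [hTFix, Set.ncard_image_of_injective _ hΨinj]
    have e1 : ↥T ≃ (bs → {c : L | c ^ q = c}) :=
      { toFun := fun c i => ⟨c.1 i, c.2 i⟩
        invFun := fun c => ⟨fun i => (c i).1, fun i => (c i).2⟩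
        left_inv := fun c => rfl
        right_inv := fun c => rfl }
    rw [← Nat.card_coe_set_eq, Nat.card_congr e1, Nat.card_fun,
      Nat.card_coe_set_eq, fq_card q n hq2 hn hL]
    congr 1
    rw [Nat.card_coe_set_eq, Set.ncard_eq_toFinset_card', hdcard]
  -- Step 3 : iterating the fixed point equation
  have hPmA : ∀ m : ℕ, Pm (m + 1) = Pm m * A.map (fun y => y ^ q ^ (s * m)) := by
    intro m
    rw [hPmDef]
    simp only [List.range_succ, List.map_append, List.prod_append, List.map_cons,
      List.map_nil, List.prod_cons, List.prod_nil, mul_one]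
  have hPm0 : Pm 0 = 1 := by
    rw [hPmDef]
    simp only [List.range_zero, List.map_nil, List.prod_nil]
  have hPmul : ∀ u ∈ Fix, ∀ m : ℕ, Matrix.vecMul u (Pm m) = fun j => (u j) ^ q ^ (s * m) := by
    intro u hu m
    rw [hFixDef, Set.mem_setOf_eq] at hu
    induction m with
    | zero =>
        rw [hPm0, Matrix.vecMul_one]
        funext j
        simp
    | succ m ih =>
        rw [hPmA m, ← Matrix.vecMul_vecMul, ih]
        funext j
        show ∑ t : Fin k, (u t ^ q ^ (s * m)) * (A.map fun y => y ^ q ^ (s * m)) t j = _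
        have h3 : ∀ t : Fin k, u t ^ q ^ (s * m) * (A.map fun y => y ^ q ^ (s * m)) t j
            = F m (u t * A t j) := by
          intro t
          rw [_root_.map_mul, hF, hF, Matrix.map_apply]
        rw [Finset.sum_congr rfl (fun t _ => h3 t), ← map_sum]
        have h4 : (u ᵥ* A) j = ∑ t : Fin k, u t * A t j := rfl
        rw [← h4, ← hu j, hF]
        have h5 := hcomp 1 m (u j)
        rw [mul_one] at h5
        rw [h5, Nat.add_comm 1 m]
  -- Step 4 : d = k implies the product is 1
  have hforward : d = k → Pm n = 1 := by
    intro hdk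
    have hspan : Submodule.span L Fix = ⊤ := by
      apply Submodule.eq_top_of_finrank_eq
      rw [← hddef, hdk, Module.finrank_pi, Fintype.card_fin]
    have hall : ∀ r : Fin k → L, Matrix.vecMul r (Pm n) = r := by
      have hker : ∀ u ∈ Fix, Matrix.vecMul u (Pm n) = u := by
        intro u hu
        rw [hPmul u hu n]
        funext j
        exact hqsn (u j)
      set ℓ : (Fin k → L) →ₗ[L] (Fin k → L) :=
        Matrix.vecMulLinear (Pm n) - LinearMap.id with hℓ
      have hsub2 : Fix ⊆ (LinearMap.ker ℓ : Set (Fin k → L)) := by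
        intro u hu
        simp only [SetLike.mem_coe, LinearMap.mem_ker, hℓ, LinearMap.sub_apply,
          Matrix.vecMulLinear_apply, LinearMap.id_apply]
        rw [hker u hu, sub_self]
      have hle : Submodule.span L Fix ≤ LinearMap.ker ℓ := Submodule.span_le.mpr hsub2
      rw [hspan] at hle
      intro r
      have h0 : ℓ r = 0 := hle Submodule.mem_top
      rw [hℓ, LinearMap.sub_apply, Matrix.vecMulLinear_apply, LinearMap.id_apply,
        sub_eq_zero] at h0
      exact h0
    ext i j
    have h2 := congrFun (hall (Pi.single i 1)) j
    rw [Matrix.single_one_vecMul, Matrix.row] at h2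
    rw [h2, Matrix.one_apply, Pi.single_apply]
    by_cases hij : i = j
    · subst hij; simp
    · rw [if_neg hij, if_neg (fun hc => hij hc.symm)]
  -- Step 5 : product 1 implies d = k
  have hbackward : Pm n = 1 → d = k := by
    intro hP
    have hF1 : ∀ y : L, y ^ q ^ s = F 1 y := by
      intro y
      rw [hF, mul_one]
    have hvm : ∀ (u : Fin k → L) (M : Matrix (Fin k) (Fin k) L) (j : Fin k),
        (u ᵥ* M) j = ∑ t : Fin k, u t * M t j := fun _ _ _ => rfl
    have hstep : ∀ (i : ℕ), i ≤ n → ∀ (w : Fin k → L) (j : Fin k),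
        Matrix.vecMul (fun t => F (n - i) (Matrix.vecMul w (Pm i) t)) A j
          = F (n - i) (Matrix.vecMul w (Pm (i + 1)) j) := by
      intro i hi w j
      rw [hvm]
      have h5 : ∀ t : Fin k, F (n - i) ((w ᵥ* Pm i) t) * A t j
          = F (n - i) ((w ᵥ* Pm i) t * (A t j) ^ q ^ (s * i)) := by
        intro t
        rw [_root_.map_mul]
        congr 1
        rw [hF, hcomp i (n - i), (by omega : i + (n - i) = n), hqsn]
      rw [Finset.sum_congr rfl (fun t _ => h5 t), ← map_sum]
      congr 1
      rw [hPmA i, ← Matrix.vecMul_vecMul, hvm]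
      apply Finset.sum_congr rfl
      intro t _
      rw [Matrix.map_apply]
    set Nm : (Fin k → L) → (Fin k → L) :=
      fun w => ∑ i ∈ Finset.range n, (fun t => F (n - i) (Matrix.vecMul w (Pm i) t)) with hNdef
    have hNapp : ∀ (w : Fin k → L) (j : Fin k),
        Nm w j = ∑ i ∈ Finset.range n, F (n - i) ((w ᵥ* Pm i) j) := by
      intro w j
      show (∑ i ∈ Finset.range n, (fun t => F (n - i) ((w ᵥ* Pm i) t))) j
        = ∑ i ∈ Finset.range n, F (n - i) ((w ᵥ* Pm i) j)
      rw [Finset.sum_apply]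
    have hNFix : ∀ w : Fin k → L, Nm w ∈ Fix := by
      intro w
      rw [hFixDef, Set.mem_setOf_eq]
      intro j
      obtain ⟨n', hn'⟩ : ∃ n', n = n' + 1 := ⟨n - 1, by omega⟩
      have hL2 : (Nm w j) ^ q ^ s
          = ∑ i ∈ Finset.range n, F ((n - i) + 1) ((w ᵥ* Pm i) j) := by
        rw [hNapp, hF1, map_sum]
        apply Finset.sum_congr rfl
        intro i _
        rw [hFadd 1 (n - i), Nat.add_comm 1 (n - i)]
      have hR1 : ((Nm w) ᵥ* A) j = ∑ i ∈ Finset.range n, F (n - i) ((w ᵥ* Pm (i + 1)) j) := by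
        show ((∑ i ∈ Finset.range n, (fun t => F (n - i) ((w ᵥ* Pm i) t))) ᵥ* A) j
          = ∑ i ∈ Finset.range n, F (n - i) ((w ᵥ* Pm (i + 1)) j)
        rw [← Matrix.vecMulLinear_apply, map_sum, Finset.sum_apply]
        apply Finset.sum_congr rfl
        intro i hi
        rw [Matrix.vecMulLinear_apply, hstep i (Finset.mem_range.mp hi).le]
      rw [hL2, hR1, hn', Finset.sum_range_succ', Finset.sum_range_succ]
      congr 1
      · apply Finset.sum_congr rfl
        intro i hi
        have hi' := Finset.mem_range.mp hi
        rw [show n' + 1 - (i + 1) + 1 = n' + 1 - i by omega]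
      · rw [hPm0, Matrix.vecMul_one, show n' + 1 - n' = 1 by omega, ← hn', hP,
          Matrix.vecMul_one, show n - 0 + 1 = 1 + n by omega, ← hFadd 1 n]
        congr 1
        rw [hF, hqsn]
    have hspan : Submodule.span L Fix = ⊤ := by
      by_contra hne
      obtain ⟨φ, hφ0, hφbot⟩ := Submodule.exists_dual_map_eq_bot_of_lt_top
        (lt_top_iff_ne_top.mpr hne) inferInstance
      have hφz : ∀ u ∈ Submodule.span L Fix, φ u = 0 := by
        intro u hu
        have h9 : φ u ∈ Submodule.map φ (Submodule.span L Fix) := Submodule.mem_map_of_mem hu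
        rw [hφbot] at h9
        exact (Submodule.mem_bot L).mp h9
      have hφN : ∀ w : Fin k → L, φ (Nm w) = 0 := fun w =>
        hφz _ (Submodule.subset_span (hNFix w))
      have hb0 : ∀ w : Fin k → L, φ w = 0 := by
        intro w
        have hkey : ∀ c : L,
            ∑ i : Fin n, (φ (fun t => F (n - (i : ℕ)) ((w ᵥ* Pm (i : ℕ)) t)))
              * c ^ q ^ (s * (n - (i : ℕ))) = 0 := by
          intro c
          have h6 : φ (∑ i ∈ Finset.range n,
              (fun t => F (n - i) (((c • w) ᵥ* Pm i) t))) = 0 := hφN (c • w)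
          have h7 : ∀ i : ℕ, (fun t => F (n - i) (((c • w) ᵥ* Pm i) t))
              = (F (n - i) c) • (fun t => F (n - i) ((w ᵥ* Pm i) t)) := by
            intro i
            funext t
            rw [Matrix.smul_vecMul, Pi.smul_apply, smul_eq_mul, _root_.map_mul,
              Pi.smul_apply, smul_eq_mul]
          rw [Finset.sum_congr rfl (fun i _ => h7 i), map_sum] at h6
          rw [← Fin.sum_univ_eq_sum_range] at h6
          rw [← h6]
          apply Finset.sum_congr rfl
          intro i _
          rw [_root_.map_smul, smul_eq_mul, hF, mul_comm]
        have h8 := dedekind q n s hq2 hn hs hL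
          (fun i => φ (fun t => F (n - (i : ℕ)) ((w ᵥ* Pm (i : ℕ)) t))) hkey ⟨0, hn⟩
        simp only at h8
        rw [← h8]
        congr 1
        funext t
        rw [hPm0, Matrix.vecMul_one, Nat.sub_zero, hF, hqsn]
      exact hφ0 (LinearMap.ext fun w => by rw [hb0 w]; rfl)
    rw [hddef, hspan, finrank_top, Module.finrank_pi, Fintype.card_fin]
  -- conclusion
  have hroots : Roots.ncard = q ^ d := by rw [hcard1, hcard2]
  show Roots.ncard = q ^ k ↔ Pm n = 1
  rw [hroots]
  constructor
  · intro h
    exact hforward (Nat.pow_right_injective hq2 h)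
  · intro h
    rw [hbackward h]
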